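/- Let $\kappa, \sigma, T > 0$ and $\phi \in \mathbb{R}$ with $0 < \phi < \frac{2\kappa}{\sigma^2(2e^{\kappa T} - 1)}$. Then the function $G(t) = \frac{2\kappa}{\sigma^2 + e^{\kappa(T-t)}\left(\frac{2\kappa}{\phi} - \sigma^2\right)}$ is well-defined on $[0,T]$ (the denominator never vanishes) and satisfies the Riccati ODE $G'(t) - \kappa G(t) + \frac{1}{2}\sigma^2 G(t)^2 = 0$ with terminal condition $G(T) = \phi$. -/

import Mathlib

noncomputable def Gfun (κ σ T φ : ℝ) (t : ℝ) : ℝ :=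
  2 * κ / (σ ^ 2 + Real.exp (κ * (T - t)) * (2 * κ / φ - σ ^ 2))

theorem stmt3 (κ σ T φ : ℝ) (hκ : 0 < κ) (hσ : 0 < σ) (hT : 0 < T)
    (hφ : 0 < φ) (hφ2 : φ < 2 * κ / (σ ^ 2 * (2 * Real.exp (κ * T) - 1))) :
    (∀ t ∈ Set.Icc (0:ℝ) T,
      σ ^ 2 + Real.exp (κ * (T - t)) * (2 * κ / φ - σ ^ 2) ≠ 0) ∧
    (∀ t ∈ Set.Icc (0:ℝ) T,
      HasDerivAt (Gfun κ σ T φ)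
        (κ * Gfun κ σ T φ t - (1 / 2) * σ ^ 2 * (Gfun κ σ T φ t) ^ 2) t) ∧
    Gfun κ σ T φ T = φ := by
  have hφ' : φ ≠ 0 := hφ.ne'
  have hE : 1 < Real.exp (κ * T) := by
    have : (0:ℝ) < κ * T := mul_pos hκ hT
    calc (1:ℝ) = Real.exp 0 := (Real.exp_zero).symm
    _ < Real.exp (κ * T) := Real.exp_lt_exp.mpr this
  have hden : 0 < σ ^ 2 * (2 * Real.exp (κ * T) - 1) := by
    have hσ2 : 0 < σ ^ 2 := by positivity
    nlinarith
  have hc : 0 < 2 * κ / φ - σ ^ 2 := by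
    rw [sub_pos, lt_div_iff₀ hφ]
    rw [lt_div_iff₀ hden] at hφ2
    nlinarith [sq_nonneg σ]
  have hD : ∀ t : ℝ, 0 < σ ^ 2 + Real.exp (κ * (T - t)) * (2 * κ / φ - σ ^ 2) := by
    intro t
    have h1 := mul_pos (Real.exp_pos (κ * (T - t))) hc
    nlinarith [sq_nonneg σ]
  refine ⟨fun t _ => (hD t).ne', fun t _ => ?_, ?_⟩
  · have h1 : HasDerivAt (fun t : ℝ => κ * (T - t)) (-κ) t := by
      simpa using ((hasDerivAt_const t T).sub (hasDerivAt_id t)).const_mul κ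
    have hd : HasDerivAt (fun t => σ ^ 2 + Real.exp (κ * (T - t)) * (2 * κ / φ - σ ^ 2))
        (Real.exp (κ * (T - t)) * (-κ) * (2 * κ / φ - σ ^ 2)) t := by
      simpa using ((h1.exp).mul_const (2 * κ / φ - σ ^ 2)).const_add (σ ^ 2)
    have hG : HasDerivAt (fun t => 2 * κ / (σ ^ 2 + Real.exp (κ * (T - t)) * (2 * κ / φ - σ ^ 2))) _ t :=
      (hasDerivAt_const t (2 * κ)).div hd (hD t).ne'
    have hfun : Gfun κ σ T φ = fun t => 2 * κ /
        (σ ^ 2 + Real.exp (κ * (T - t)) * (2 * κ / φ - σ ^ 2)) := rfl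
    rw [hfun]
    convert hG using 1
    have hDne := (hD t).ne'
    simp only [Gfun]
    set c := 2 * κ / φ - σ ^ 2 with hcdef
    set e := Real.exp (κ * (T - t)) with hedef
    field_simp
    ring
  · simp only [Gfun, sub_self, mul_zero, Real.exp_zero, one_mul]
    have : σ ^ 2 + (2 * κ / φ - σ ^ 2) = 2 * κ / φ := by ring
    rw [this]
    field_simp
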